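/- For every ν ∈ ℝ and every natural number A there is a constant C = C(ν, A) such that for all y ∈ ℝ: γ_ν(1/2 − A − iy) ≠ 0 and |γ_ν(1/2 + A + iy)| ≤ C·(1 + |y|)^{3A}·|γ_ν(1/2 − A − iy)|. -/

import Mathlib

open Complex

/-- The archimedean gamma factor of a self-dual Hecke–Maass cusp form for `SL(3,ℤ)` with
Langlands parameter `(iν, 0, -iν)`:
`γ_ν(z) = π^{-3z/2} Γ((z-iν)/2) Γ(z/2) Γ((z+iν)/2)`. -/
noncomputable def gammaFactor (ν : ℝ) (z : ℂ) : ℂ :=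
  (Real.pi : ℂ) ^ (-3 * z / 2) * Complex.Gamma ((z - Complex.I * ν) / 2) *
    Complex.Gamma (z / 2) * Complex.Gamma ((z + Complex.I * ν) / 2)

lemma gamma_shift_eq (s : ℂ) (hs : ∀ j : ℕ, s + j ≠ 0) (A : ℕ) :
    Complex.Gamma (s + A) = (∏ j ∈ Finset.range A, (s + j)) * Complex.Gamma s := by
  induction A with
  | zero => simp
  | succ n ih =>
    have h1 : (s + ((n:ℂ)+1)) = (s + n) + 1 := by ring
    rw [show ((n+1:ℕ):ℂ) = (n:ℂ)+1 by push_cast; ring, h1, Complex.Gamma_add_one _ (by exact_mod_cast hs n), ih, Finset.prod_range_succ]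
    ring

/-- Key pairing lemma: nonvanishing at `x - it` and bound for `Γ(x + A + it)`. -/
lemma gamma_pair_bound (A : ℕ) (x t R : ℝ) (hx : x = 1/4 - A/2)
    (hR : |x| + |t| + A ≤ R) :
    Complex.Gamma ((x:ℂ) - Complex.I * t) ≠ 0 ∧
    ‖Complex.Gamma ((x:ℂ) + A + Complex.I * t)‖ ≤
      R ^ A * ‖Complex.Gamma ((x:ℂ) - Complex.I * t)‖ := by
  set s : ℂ := (x:ℂ) + Complex.I * t with hs_def
  have hs : ∀ j : ℕ, s + j ≠ 0 := by
    intro j h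
    have hre := congrArg Complex.re h
    simp [hs_def] at hre
    have h4 : (1:ℝ) + 4*j = 2*A := by rw [hx] at hre; linarith
    have h4' : (1 + 4*j : ℕ) = 2*A := by exact_mod_cast h4
    omega
  have hΓs : Complex.Gamma s ≠ 0 := by
    refine Complex.Gamma_ne_zero fun m hm => hs m ?_
    rw [hm]; ring
  have hconj : (starRingEnd ℂ) s = (x:ℂ) - Complex.I * t := by
    simp [hs_def, Complex.ext_iff]
  have hden : Complex.Gamma ((x:ℂ) - Complex.I * t) = (starRingEnd ℂ) (Complex.Gamma s) := by
    rw [← Complex.Gamma_conj, hconj]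
  have hden_ne : Complex.Gamma ((x:ℂ) - Complex.I * t) ≠ 0 := by
    rw [hden]; simpa using hΓs
  refine ⟨hden_ne, ?_⟩
  have hnum : (x:ℂ) + A + Complex.I * t = s + A := by rw [hs_def]; ring
  rw [hnum, gamma_shift_eq s hs A, hden]
  rw [norm_mul, RCLike.norm_conj]
  gcongr
  rw [norm_prod]
  have hRA : ∀ j ∈ Finset.range A, ‖s + (j:ℂ)‖ ≤ R := by
    intro j hj
    have hj' : (j:ℝ) ≤ A := by
      exact_mod_cast le_of_lt (Finset.mem_range.mp hj) |>.trans (le_refl A) |>.trans (le_refl A)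
    calc ‖s + (j:ℂ)‖ ≤ ‖s‖ + ‖(j:ℂ)‖ := norm_add_le _ _
      _ ≤ (|x| + |t|) + A := by
          have : ‖s‖ ≤ |x| + |t| := by
            rw [hs_def]
            calc ‖(x:ℂ) + Complex.I * t‖ ≤ ‖(x:ℂ)‖ + ‖Complex.I * (t:ℂ)‖ := norm_add_le _ _
              _ = |x| + |t| := by simp
          have hjn : ‖(j:ℂ)‖ = (j:ℝ) := by simp
          rw [hjn]; linarith
      _ ≤ R := hR
  calc ∏ j ∈ Finset.range A, ‖s + (j:ℂ)‖ ≤ ∏ _j ∈ Finset.range A, R :=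
        Finset.prod_le_prod (fun i _ => norm_nonneg _) hRA
    _ = R ^ A := by rw [Finset.prod_const, Finset.card_range]

/-- Stirling-type bound on the shifted contour `Re(s) = -A`:
`γ_ν(1/2 - A - iy) ≠ 0` and `|γ_ν(1/2 + A + iy)| ≤ C (1+|y|)^{3A} |γ_ν(1/2 - A - iy)|`. -/
theorem gammaFactor_quotient_bound (ν : ℝ) (A : ℕ) :
    ∃ C : ℝ, 0 < C ∧ ∀ y : ℝ,
      gammaFactor ν (1/2 - A - Complex.I * y) ≠ 0 ∧
      ‖gammaFactor ν (1/2 + A + Complex.I * y)‖ ≤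
        C * (1 + |y|) ^ (3 * A) * ‖gammaFactor ν (1/2 - A - Complex.I * y)‖ := by
  set K : ℝ := 2*A + 1 + |ν| with hK_def
  have hK1 : (1:ℝ) ≤ K := by
    have h1 := abs_nonneg ν
    have h2 : (0:ℝ) ≤ A := Nat.cast_nonneg A
    rw [hK_def]; linarith
  refine ⟨K ^ (3*A), by positivity, fun y => ?_⟩
  set x : ℝ := 1/4 - A/2 with hx_def
  set R : ℝ := K * (1 + |y|) with hR_def
  have habs : ∀ t : ℝ, |t| ≤ (|y| + |ν|)/2 → |x| + |t| + A ≤ R := by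
    intro t ht
    have hxb : |x| ≤ 1/4 + (A:ℝ)/2 := by
      have hA0 : (0:ℝ) ≤ A := Nat.cast_nonneg A
      rw [abs_le, hx_def]
      constructor <;> linarith
    have hy0 : (0:ℝ) ≤ |y| := abs_nonneg y
    have hν0 : (0:ℝ) ≤ |ν| := abs_nonneg ν
    have hKy : |y| ≤ K * |y| := le_mul_of_one_le_left hy0 hK1
    rw [hR_def, hK_def]
    nlinarith [abs_nonneg t]
  -- the three pairing bounds
  have ht1 : |(y - ν)/2| ≤ (|y| + |ν|)/2 := by
    rw [abs_div, _root_.abs_of_nonneg (by norm_num : (0:ℝ) ≤ 2)]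
    have : |y - ν| ≤ |y| + |ν| := (abs_sub y ν)
    linarith
  have ht2 : |y/2| ≤ (|y| + |ν|)/2 := by
    rw [abs_div, _root_.abs_of_nonneg (by norm_num : (0:ℝ) ≤ 2)]
    have := abs_nonneg ν
    linarith
  have ht3 : |(y + ν)/2| ≤ (|y| + |ν|)/2 := by
    rw [abs_div, _root_.abs_of_nonneg (by norm_num : (0:ℝ) ≤ 2)]
    have := abs_add_le y ν
    linarith
  obtain ⟨hd1, hb1⟩ := gamma_pair_bound A x ((y - ν)/2) R hx_def (habs _ ht1)
  obtain ⟨hd2, hb2⟩ := gamma_pair_bound A x (y/2) R hx_def (habs _ ht2)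
  obtain ⟨hd3, hb3⟩ := gamma_pair_bound A x ((y + ν)/2) R hx_def (habs _ ht3)
  -- rewriting the arguments of the gamma factors
  have hxC : (x:ℂ) = 1/4 - (A:ℂ)/2 := by rw [hx_def]; push_cast; ring
  have e1p : ((1/2 + (A:ℂ) + Complex.I * y) - Complex.I * ν)/2
      = (x:ℂ) + A + Complex.I * (((y - ν)/2 : ℝ) : ℂ) := by
    rw [hxC]; push_cast; ring
  have e2p : (1/2 + (A:ℂ) + Complex.I * y)/2
      = (x:ℂ) + A + Complex.I * ((y/2 : ℝ) : ℂ) := by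
    rw [hxC]; push_cast; ring
  have e3p : ((1/2 + (A:ℂ) + Complex.I * y) + Complex.I * ν)/2
      = (x:ℂ) + A + Complex.I * (((y + ν)/2 : ℝ) : ℂ) := by
    rw [hxC]; push_cast; ring
  have e1m : ((1/2 - (A:ℂ) - Complex.I * y) - Complex.I * ν)/2
      = (x:ℂ) - Complex.I * (((y + ν)/2 : ℝ) : ℂ) := by
    rw [hxC]; push_cast; ring
  have e2m : (1/2 - (A:ℂ) - Complex.I * y)/2
      = (x:ℂ) - Complex.I * ((y/2 : ℝ) : ℂ) := by
    rw [hxC]; push_cast; ring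
  have e3m : ((1/2 - (A:ℂ) - Complex.I * y) + Complex.I * ν)/2
      = (x:ℂ) - Complex.I * (((y - ν)/2 : ℝ) : ℂ) := by
    rw [hxC]; push_cast; ring
  -- π-power comparison
  have hπ : ‖(Real.pi : ℂ) ^ (-3 * (1/2 + (A:ℂ) + Complex.I * y) / 2)‖
      ≤ ‖(Real.pi : ℂ) ^ (-3 * (1/2 - (A:ℂ) - Complex.I * y) / 2)‖ := by
    rw [Complex.norm_cpow_eq_rpow_re_of_pos Real.pi_pos,
      Complex.norm_cpow_eq_rpow_re_of_pos Real.pi_pos]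
    apply Real.rpow_le_rpow_of_exponent_le (by linarith [Real.pi_gt_three])
    have h1 : (-3 * (1/2 + (A:ℂ) + Complex.I * y) / 2)
        = (((-3/2) * (1/2 + A) : ℝ) : ℂ) + (((-3/2) * y : ℝ) : ℂ) * Complex.I := by
      push_cast; ring
    have h2 : (-3 * (1/2 - (A:ℂ) - Complex.I * y) / 2)
        = (((-3/2) * (1/2 - A) : ℝ) : ℂ) + (((3/2) * y : ℝ) : ℂ) * Complex.I := by
      push_cast; ring
    rw [h1, h2]
    simp only [Complex.add_re, Complex.ofReal_re, Complex.mul_re, Complex.I_re,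
      Complex.I_im, Complex.ofReal_im]
    have : (0:ℝ) ≤ A := Nat.cast_nonneg A
    nlinarith
  have hπm : (Real.pi : ℂ) ^ (-3 * (1/2 - (A:ℂ) - Complex.I * y) / 2) ≠ 0 := by
    intro h
    have : ‖(Real.pi : ℂ) ^ (-3 * (1/2 - (A:ℂ) - Complex.I * y) / 2)‖ = 0 := by
      rw [h]; simp
    rw [Complex.norm_cpow_eq_rpow_re_of_pos Real.pi_pos] at this
    exact absurd this (by positivity)
  constructor
  · unfold gammaFactor
    rw [e1m, e2m, e3m]
    exact mul_ne_zero (mul_ne_zero (mul_ne_zero hπm hd3) hd2) hd1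
  · have hR0 : (0:ℝ) ≤ R := by
      rw [hR_def]; positivity
    unfold gammaFactor
    rw [e1p, e2p, e3p, e1m, e2m, e3m]
    rw [norm_mul, norm_mul, norm_mul, norm_mul, norm_mul, norm_mul]
    calc ‖(Real.pi : ℂ) ^ (-3 * (1/2 + (A:ℂ) + Complex.I * y) / 2)‖ *
          ‖Complex.Gamma ((x:ℂ) + A + Complex.I * (((y - ν)/2 : ℝ) : ℂ))‖ *
          ‖Complex.Gamma ((x:ℂ) + A + Complex.I * ((y/2 : ℝ) : ℂ))‖ *
          ‖Complex.Gamma ((x:ℂ) + A + Complex.I * (((y + ν)/2 : ℝ) : ℂ))‖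
        ≤ ‖(Real.pi : ℂ) ^ (-3 * (1/2 - (A:ℂ) - Complex.I * y) / 2)‖ *
          (R ^ A * ‖Complex.Gamma ((x:ℂ) - Complex.I * (((y - ν)/2 : ℝ) : ℂ))‖) *
          (R ^ A * ‖Complex.Gamma ((x:ℂ) - Complex.I * ((y/2 : ℝ) : ℂ))‖) *
          (R ^ A * ‖Complex.Gamma ((x:ℂ) - Complex.I * (((y + ν)/2 : ℝ) : ℂ))‖) := by
          gcongr
      _ = R ^ (3*A) *
          (‖(Real.pi : ℂ) ^ (-3 * (1/2 - (A:ℂ) - Complex.I * y) / 2)‖ *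
           ‖Complex.Gamma ((x:ℂ) - Complex.I * (((y + ν)/2 : ℝ) : ℂ))‖ *
           ‖Complex.Gamma ((x:ℂ) - Complex.I * ((y/2 : ℝ) : ℂ))‖ *
           ‖Complex.Gamma ((x:ℂ) - Complex.I * (((y - ν)/2 : ℝ) : ℂ))‖) := by
          rw [show 3*A = A + A + A by ring, pow_add, pow_add]; ring
      _ = K ^ (3*A) * (1 + |y|) ^ (3*A) *
          (‖(Real.pi : ℂ) ^ (-3 * (1/2 - (A:ℂ) - Complex.I * y) / 2)‖ *
           ‖Complex.Gamma ((x:ℂ) - Complex.I * (((y + ν)/2 : ℝ) : ℂ))‖ *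
           ‖Complex.Gamma ((x:ℂ) - Complex.I * ((y/2 : ℝ) : ℂ))‖ *
           ‖Complex.Gamma ((x:ℂ) - Complex.I * (((y - ν)/2 : ℝ) : ℂ))‖) := by
          rw [hR_def, mul_pow]
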